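/- Consider the personalized bi-valued instance with two agents and four goods g_1, g_2, g_3, g_4, where agent 1's values for (g_1, g_2, g_3, g_4) are (50, 50, 1, 1) and agent 2's values are (3, 1, 1, 1), with additive utilities. The allocation X* = (X_1, X_2) with X_1 = {g_2} and X_2 = {g_1, g_3, g_4} is the unique allocation maximizing the Nash welfare, and X* is not EFX. Consequently, every Nash-welfare-maximizing allocation of this instance fails to be EFX, so for personalized bi-valued instances a maximum Nash welfare allocation need not be EFX. -/

import Mathlib

open Finset

/-- Additive utility of a bundle: the sum of the values of the single goods in it. -/
def util (u : Fin 2 → Fin 4 → ℝ) (i : Fin 2) (S : Finset (Fin 4)) : ℝ :=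
  ∑ g ∈ S, u i g

/-- `X` is an allocation: a partition of the four goods into two (possibly empty) bundles. -/
def IsAllocation (X : Fin 2 → Finset (Fin 4)) : Prop :=
  (∀ g : Fin 4, ∃ i, g ∈ X i) ∧ ∀ i j : Fin 2, i ≠ j → Disjoint (X i) (X j)

/-- `X` is EFX w.r.t. utilities `u`. -/
def IsEFX (u : Fin 2 → Fin 4 → ℝ) (X : Fin 2 → Finset (Fin 4)) : Prop :=
  ∀ i j : Fin 2, ∀ g ∈ X j, util u i ((X j).erase g) ≤ util u i (X i)

/-- The Nash welfare of a two-agent allocation: the product of the two agents' utilities. -/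
def nashWelfare (u : Fin 2 → Fin 4 → ℝ) (X : Fin 2 → Finset (Fin 4)) : ℝ :=
  util u 0 (X 0) * util u 1 (X 1)

/-- Agent 1's values for the goods `(g₁, g₂, g₃, g₄)` are `(50, 50, 1, 1)` and agent 2's
values are `(3, 1, 1, 1)`. -/
def uMNW : Fin 2 → Fin 4 → ℝ := ![![50, 50, 1, 1], ![3, 1, 1, 1]]

/-- The allocation `X* = ({g₂}, {g₁, g₃, g₄})`. -/
def Xstar : Fin 2 → Finset (Fin 4) := ![{1}, {0, 2, 3}]

lemma key (S : Finset (Fin 4)) :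
    (∑ g ∈ S, uMNW 0 g) * (6 - ∑ g ∈ S, uMNW 1 g) ≤ 250 ∧
    ((∑ g ∈ S, uMNW 0 g) * (6 - ∑ g ∈ S, uMNW 1 g) = 250 → S = {1}) := by
  have h : S ∈ (Finset.univ : Finset (Finset (Fin 4))) := mem_univ S
  fin_cases h <;> norm_num [uMNW] <;> decide

lemma alloc_compl {X : Fin 2 → Finset (Fin 4)} (h : IsAllocation X) : X 1 = (X 0)ᶜ := by
  ext g
  simp only [Finset.mem_compl]
  constructor
  · intro hg hg0
    exact (h.2 0 1 (by decide)).forall_ne_finset hg0 hg rfl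
  · intro hg0
    rcases h.1 g with ⟨i, hi⟩
    fin_cases i
    · exact absurd hi hg0
    · exact hi

lemma nash_eq {X : Fin 2 → Finset (Fin 4)} (h : IsAllocation X) :
    nashWelfare uMNW X = (∑ g ∈ X 0, uMNW 0 g) * (6 - ∑ g ∈ X 0, uMNW 1 g) := by
  have hc := alloc_compl h
  have hsum : ∑ g ∈ (X 0)ᶜ, uMNW 1 g + ∑ g ∈ X 0, uMNW 1 g = ∑ g : Fin 4, uMNW 1 g :=
    Finset.sum_compl_add_sum _ _
  have htot : ∑ g : Fin 4, uMNW 1 g = 6 := by norm_num [Fin.sum_univ_four, uMNW, Matrix.cons_val_two, Matrix.vecHead, Matrix.vecTail,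
    (show ![(3:ℝ), 1, 1, 1] 3 = 1 from rfl)]
  rw [nashWelfare, util, util, hc]
  rw [htot] at hsum
  have h2 : ∑ g ∈ (X 0)ᶜ, uMNW 1 g = 6 - ∑ g ∈ X 0, uMNW 1 g := by linarith
  rw [h2]

/-- In the instance where agent 1's values are `(50, 50, 1, 1)` and agent
2's values are `(3, 1, 1, 1)`, the allocation `X* = ({g₂}, {g₁, g₃, g₄})` is the unique
Nash-welfare-maximizing allocation, and `X*` is not EFX; consequently every
Nash-welfare-maximizing allocation of this instance fails to be EFX. -/
theorem mnw_not_EFX_personalized_bivalued :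
    (∀ X : Fin 2 → Finset (Fin 4), IsAllocation X →
      nashWelfare uMNW X ≤ nashWelfare uMNW Xstar) ∧
    (∀ X : Fin 2 → Finset (Fin 4), IsAllocation X →
      nashWelfare uMNW X = nashWelfare uMNW Xstar → X = Xstar) ∧
    ¬ IsEFX uMNW Xstar ∧
    (∀ X : Fin 2 → Finset (Fin 4), IsAllocation X →
      (∀ Y : Fin 2 → Finset (Fin 4), IsAllocation Y →
        nashWelfare uMNW Y ≤ nashWelfare uMNW X) →
      ¬ IsEFX uMNW X) := by
  have hXstar : IsAllocation Xstar := by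
    constructor
    · intro g; fin_cases g
      · exact ⟨1, by decide⟩
      · exact ⟨0, by decide⟩
      · exact ⟨1, by decide⟩
      · exact ⟨1, by decide⟩
    · intro i j hij; fin_cases i <;> fin_cases j <;> first | exact absurd rfl hij | decide
  have hval : nashWelfare uMNW Xstar = 250 := by
    rw [nash_eq hXstar]
    norm_num [Xstar, uMNW]
  have hmax : ∀ X : Fin 2 → Finset (Fin 4), IsAllocation X →
      nashWelfare uMNW X ≤ nashWelfare uMNW Xstar := by
    intro X hX
    rw [hval, nash_eq hX]
    exact (key (X 0)).1
  have huniq : ∀ X : Fin 2 → Finset (Fin 4), IsAllocation X →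
      nashWelfare uMNW X = nashWelfare uMNW Xstar → X = Xstar := by
    intro X hX heq
    rw [hval, nash_eq hX] at heq
    have h0 : X 0 = {1} := (key (X 0)).2 heq
    funext i
    fin_cases i
    · exact h0
    · show X 1 = Xstar 1
      rw [alloc_compl hX, h0]; decide
  have hnefx : ¬ IsEFX uMNW Xstar := by
    intro h
    have := h 0 1 2 (by decide)
    have he : ((Xstar 1).erase 2) = {0, 3} := by decide
    rw [he] at this
    rw [util, util, Finset.sum_pair (show (0:Fin 4) ≠ 3 by decide)] at this
    norm_num [Xstar, uMNW, Matrix.vecHead, Matrix.vecTail,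
      (show ![(50:ℝ), 50, 1, 1] 3 = 1 from rfl)] at this
  refine ⟨hmax, huniq, hnefx, ?_⟩
  intro X hX hXmax hefx
  have heq : nashWelfare uMNW X = nashWelfare uMNW Xstar :=
    le_antisymm (hmax X hX) (hXmax Xstar hXstar)
  rw [huniq X hX heq] at hefx
  exact hnefx hefx
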